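/- Let Δ be a group and let A, B be subgroups of Δ with c(A,B) = m finite. Then for every natural number n and every subgroup Δ' of Δ, if c(A, Δ') ≤ n then c(B, Δ') ≤ m · n. In particular, the set {Δ' ≤ Δ : c(A,Δ') ≤ n} is contained in the set {Δ' ≤ Δ : c(B,Δ') ≤ m · n}. -/

import Mathlib

/-- The commensurability index of two subgroups `A`, `B` of a group `G`:
`c(A,B) = [A : A ⊓ B] * [B : A ⊓ B]`. Following Mathlib's convention for
`Subgroup.relindex`, a value of `0` means the index is infinite. -/
noncomputable def commIndex {G : Type*} [Group G] (A B : Subgroup G) : ℕ :=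
  (A ⊓ B).relIndex A * (A ⊓ B).relIndex B

theorem commIndex_eq {G : Type*} [Group G] (A B : Subgroup G) :
    commIndex A B = B.relIndex A * A.relIndex B := by
  rw [commIndex, Subgroup.inf_relIndex_left, inf_comm, Subgroup.inf_relIndex_left]

/-- Key transitivity bound: if `[D : D ⊓ A]`-type relindex `D.relindex A` is
finite and `A.relindex B` is finite, then `D.relindex B` is finite and bounded
by their product. -/
theorem relindex_trans_bound {G : Type*} [Group G] (A B D : Subgroup G)
    (h1 : D.relIndex A ≠ 0) (h2 : A.relIndex B ≠ 0) :
    D.relIndex B ≠ 0 ∧ D.relIndex B ≤ D.relIndex A * A.relIndex B := by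
  have hmem : A ⊓ B ⊓ D ≤ A ⊓ B := inf_le_left
  have hAB : (A ⊓ B : Subgroup G) ≤ B := inf_le_right
  have e1 : (A ⊓ B ⊓ D).relIndex (A ⊓ B) * (A ⊓ B).relIndex B
      = (A ⊓ B ⊓ D).relIndex B := Subgroup.relIndex_mul_relIndex _ _ _ hmem hAB
  have einf : (A ⊓ D) ⊓ (A ⊓ B) = A ⊓ B ⊓ D := by
    rw [inf_comm (A ⊓ D)]; simp [inf_assoc, inf_comm, inf_left_comm]
  have e2 : (A ⊓ B ⊓ D).relIndex (A ⊓ B) = (A ⊓ D).relIndex (A ⊓ B) := by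
    rw [← einf, Subgroup.inf_relIndex_right]
  have hDA : (A ⊓ D).relIndex A = D.relIndex A := by
    rw [inf_comm, Subgroup.inf_relIndex_right]
  have h1' : (A ⊓ D).relIndex A ≠ 0 := by rw [hDA]; exact h1
  have t_ne : (A ⊓ D).relIndex (A ⊓ B) ≠ 0 := fun h =>
    h1' (Subgroup.relIndex_eq_zero_of_le_right inf_le_left h)
  have t_le : (A ⊓ D).relIndex (A ⊓ B) ≤ D.relIndex A := by
    rw [← hDA]; exact Subgroup.relIndex_le_of_le_right inf_le_left h1'
  have s_eq : (A ⊓ B).relIndex B = A.relIndex B := Subgroup.inf_relIndex_right _ _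
  have big_ne : (A ⊓ B ⊓ D).relIndex B ≠ 0 := by
    rw [← e1, e2, s_eq]; exact mul_ne_zero t_ne h2
  have hle : A ⊓ B ⊓ D ≤ B ⊓ D :=
    le_inf (le_trans inf_le_left inf_le_right) inf_le_right
  have hDB : (B ⊓ D).relIndex B = D.relIndex B := by
    rw [inf_comm, Subgroup.inf_relIndex_right]
  constructor
  · intro h
    exact big_ne (Subgroup.relIndex_eq_zero_of_le_left hle (hDB.trans h))
  · calc D.relIndex B = (B ⊓ D).relIndex B := hDB.symm
      _ ≤ (A ⊓ B ⊓ D).relIndex B := Subgroup.relIndex_le_of_le_left hle big_ne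
      _ = (A ⊓ D).relIndex (A ⊓ B) * A.relIndex B := by rw [← e1, e2, s_eq]
      _ ≤ D.relIndex A * A.relIndex B := Nat.mul_le_mul_right _ t_le

/-- If `A`, `B` are subgroups of `Δ` with `c(A,B) = m` finite, then every
subgroup `Δ'` with `c(A,Δ') ≤ n` (finite) satisfies `c(B,Δ') ≤ m * n` (finite);
in particular `{Δ' : c(A,Δ') ≤ n} ⊆ {Δ' : c(B,Δ') ≤ m * n}`. -/
theorem commIndex_growth_comparison {Δ : Type*} [Group Δ] (A B : Subgroup Δ)
    (m : ℕ) (hm : m ≠ 0) (hAB : commIndex A B = m) :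
    (∀ n : ℕ, ∀ Δ' : Subgroup Δ, commIndex A Δ' ≠ 0 → commIndex A Δ' ≤ n →
      commIndex B Δ' ≠ 0 ∧ commIndex B Δ' ≤ m * n) ∧
    ∀ n : ℕ,
      {Δ' : Subgroup Δ | commIndex A Δ' ≠ 0 ∧ commIndex A Δ' ≤ n} ⊆
      {Δ' : Subgroup Δ | commIndex B Δ' ≠ 0 ∧ commIndex B Δ' ≤ m * n} := by
  have main : ∀ n : ℕ, ∀ Δ' : Subgroup Δ, commIndex A Δ' ≠ 0 → commIndex A Δ' ≤ n →
      commIndex B Δ' ≠ 0 ∧ commIndex B Δ' ≤ m * n := by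
    intro n Δ' hne hle
    rw [commIndex_eq] at hne hle hAB ⊢
    have hBA : B.relIndex A ≠ 0 := by
      intro h; exact hm (by rw [← hAB, h, zero_mul])
    have hABr : A.relIndex B ≠ 0 := by
      intro h; exact hm (by rw [← hAB, h, mul_zero])
    have hDA : Δ'.relIndex A ≠ 0 := left_ne_zero_of_mul hne
    have hAD : A.relIndex Δ' ≠ 0 := right_ne_zero_of_mul hne
    obtain ⟨h1, h1'⟩ := relindex_trans_bound A B Δ' hDA hABr
    obtain ⟨h2, h2'⟩ := relindex_trans_bound A Δ' B hBA hAD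
    refine ⟨mul_ne_zero h1 h2, ?_⟩
    calc Δ'.relIndex B * B.relIndex Δ'
        ≤ (Δ'.relIndex A * A.relIndex B) * (B.relIndex A * A.relIndex Δ') :=
          Nat.mul_le_mul h1' h2'
      _ = (B.relIndex A * A.relIndex B) * (Δ'.relIndex A * A.relIndex Δ') := by ring
      _ ≤ m * n := by rw [hAB]; exact Nat.mul_le_mul_left m hle
  exact ⟨main, fun n Δ' h => main n Δ' h.1 h.2⟩
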